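/- Let q(t), p(t), Q(t), P(t) solve Hagedorn's equations q̇ = p/m, ṗ = −∇V(q), Q̇ = P/m, Ṗ = −∇²V(q)Q in dimension d = 3, with V rotationally invariant (V(Rx) = V(x) for all R ∈ SO(3)). Then the complex 3×3 matrix 𝒥(t) := q(t)^ P(t) − p(t)^ Q(t) is constant in t, where v^ denotes the hat map (antisymmetric matrix of v). -/

import Mathlib

open Matrix

/-- Coercion of a real matrix to a complex matrix. -/
def coeM (M : Matrix (Fin 3) (Fin 3) ℝ) : Matrix (Fin 3) (Fin 3) ℂ :=
  M.map (fun x => (x : ℂ))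

/-- The hat map `v ↦ v^`, sending `v ∈ ℝ³` to the antisymmetric matrix with
`v^ w = v × w`. -/
def hatMap (v : Fin 3 → ℝ) : Matrix (Fin 3) (Fin 3) ℝ :=
  !![0, -v 2, v 1; v 2, 0, -v 0; -v 1, v 0, 0]

/-- The gradient `∇V` of `V : ℝ³ → ℝ`. -/
noncomputable def grad (V : (Fin 3 → ℝ) → ℝ) (x : Fin 3 → ℝ) : Fin 3 → ℝ :=
  fun i => fderiv ℝ V x (Pi.single i 1)

/-- The Hessian matrix `∇²V` of `V : ℝ³ → ℝ`. -/
noncomputable def hess (V : (Fin 3 → ℝ) → ℝ) (x : Fin 3 → ℝ) :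
    Matrix (Fin 3) (Fin 3) ℝ :=
  Matrix.of fun i j =>
    fderiv ℝ (fun y => fderiv ℝ V y (Pi.single j 1)) x (Pi.single i 1)

/- ### Auxiliary lemmas -/

lemma clm_expand (φ : (Fin 3 → ℝ) →L[ℝ] ℝ) (w : Fin 3 → ℝ) :
    φ w = ∑ l, w l * φ (Pi.single l 1) := by
  conv_lhs => rw [← Finset.univ_sum_single w]
  rw [map_sum]
  refine Finset.sum_congr rfl fun l _ => ?_
  have h : Pi.single l (w l) = w l • (Pi.single l 1 : Fin 3 → ℝ) := by
    ext k
    rcases eq_or_ne k l with rfl | hk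
    · simp
    · simp [Pi.single_eq_of_ne hk]
  rw [h, _root_.map_smul, smul_eq_mul]

lemma grad_equivariant (V : (Fin 3 → ℝ) → ℝ) (hV : Differentiable ℝ V)
    (R : Matrix (Fin 3) (Fin 3) ℝ) (hR : Rᵀ * R = 1)
    (hinv : ∀ x, V (R.mulVec x) = V x) (x : Fin 3 → ℝ) :
    grad V (R.mulVec x) = R.mulVec (grad V x) := by
  have hR' : R * Rᵀ = 1 := mul_eq_one_comm.mp hR
  set L : (Fin 3 → ℝ) →L[ℝ] (Fin 3 → ℝ) :=
    LinearMap.toContinuousLinearMap (Matrix.mulVecLin R) with hL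
  have hcomp : HasFDerivAt V ((fderiv ℝ V (R.mulVec x)).comp L) x := by
    have h1 : HasFDerivAt (fun y => V (R.mulVec y))
        ((fderiv ℝ V (R.mulVec x)).comp L) x :=
      (hV (R.mulVec x)).hasFDerivAt.comp x L.hasFDerivAt
    have : (fun y => V (R.mulVec y)) = V := funext hinv
    rwa [this] at h1
  have key : ∀ w, fderiv ℝ V x w = fderiv ℝ V (R.mulVec x) (R.mulVec w) := by
    intro w
    rw [(hV x).hasFDerivAt.unique hcomp]
    rfl
  funext j
  have h1 : Pi.single j (1:ℝ) = R.mulVec (Rᵀ.mulVec (Pi.single j 1)) := by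
    rw [Matrix.mulVec_mulVec, hR', Matrix.one_mulVec]
  calc grad V (R.mulVec x) j = fderiv ℝ V (R.mulVec x) (Pi.single j 1) := rfl
    _ = fderiv ℝ V x (Rᵀ.mulVec (Pi.single j 1)) := by
        conv_lhs => rw [h1]
        exact (key _).symm
    _ = ∑ l, (Rᵀ.mulVec (Pi.single j 1)) l * grad V x l := clm_expand _ _
    _ = ∑ l, R j l * grad V x l := by rw [Matrix.mulVec_single_one]; rfl
    _ = R.mulVec (grad V x) j := rfl

/-- The rotation family generated by a matrix `A` (for `A` an infinitesimal rotation). -/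
noncomputable def Rot (A : Matrix (Fin 3) (Fin 3) ℝ) (s : ℝ) : Matrix (Fin 3) (Fin 3) ℝ :=
  1 + Real.sin s • A + (1 - Real.cos s) • (A * A)

lemma Rot_zero (A : Matrix (Fin 3) (Fin 3) ℝ) : Rot A 0 = 1 := by
  simp [Rot]

lemma Rot_deriv (A : Matrix (Fin 3) (Fin 3) ℝ) (l b : Fin 3) :
    HasDerivAt (fun s => Rot A s l b) (A l b) 0 := by
  have h1 : HasDerivAt (fun s : ℝ => Real.sin s) 1 0 := by
    simpa using Real.hasDerivAt_sin 0
  have h2 : HasDerivAt (fun s : ℝ => 1 - Real.cos s) 0 0 := by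
    simpa using (Real.hasDerivAt_cos 0).const_sub 1
  have heq : (fun s => Rot A s l b) =
      fun s => (1 : Matrix (Fin 3) (Fin 3) ℝ) l b + Real.sin s * A l b
        + (1 - Real.cos s) * ((A * A) l b) := rfl
  rw [heq]
  have := ((hasDerivAt_const 0 ((1 : Matrix (Fin 3) (Fin 3) ℝ) l b)).fun_add
    (h1.mul_const (A l b))).fun_add (h2.mul_const ((A * A) l b))
  simpa using this

lemma mulVec_hasDerivAt (A : Matrix (Fin 3) (Fin 3) ℝ) (v : Fin 3 → ℝ) (l : Fin 3) :
    HasDerivAt (fun s => ((Rot A s).mulVec v) l) ((A.mulVec v) l) 0 := by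
  have heq : (fun s => ((Rot A s).mulVec v) l) = fun s => ∑ b, Rot A s l b * v b := by
    funext s; simp [Matrix.mulVec, dotProduct]
  rw [heq]
  have : HasDerivAt (fun s => ∑ b, Rot A s l b * v b) (∑ b, A l b * v b) 0 :=
    HasDerivAt.fun_sum fun b _ => (Rot_deriv A l b).mul_const (v b)
  simpa [Matrix.mulVec, dotProduct] using this

lemma key_gen (V : (Fin 3 → ℝ) → ℝ) (hV : ContDiff ℝ 2 V)
    (hVinv : ∀ R : Matrix (Fin 3) (Fin 3) ℝ, Rᵀ * R = 1 → R.det = 1 →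
      ∀ x, V (R.mulVec x) = V x)
    (A : Matrix (Fin 3) (Fin 3) ℝ)
    (hA : ∀ s, (Rot A s)ᵀ * Rot A s = 1) (hdet : ∀ s, (Rot A s).det = 1)
    (x : Fin 3 → ℝ) (j : Fin 3) :
    ∑ l, (A.mulVec x) l * hess V x l j = (A.mulVec (grad V x)) j := by
  have hdiff : Differentiable ℝ V := hV.differentiable (by norm_num)
  set g : (Fin 3 → ℝ) → ℝ := fun y => fderiv ℝ V y (Pi.single j 1) with hg
  have hgC : ContDiff ℝ 1 g :=
    (hV.fderiv_right (m := 1) (by norm_num)).clm_apply contDiff_const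
  have hgd : Differentiable ℝ g := hgC.differentiable one_ne_zero
  set c : ℝ → (Fin 3 → ℝ) := fun s => (Rot A s).mulVec x with hcdef
  have hc : HasDerivAt c (A.mulVec x) 0 :=
    hasDerivAt_pi.2 fun l => mulVec_hasDerivAt A x l
  have hc0 : c 0 = x := by simp [hcdef, Rot_zero, Matrix.one_mulVec]
  have hleft : HasDerivAt (fun s => g (c s)) (fderiv ℝ g x (A.mulVec x)) 0 := by
    have := ((hgd (c 0)).hasFDerivAt).comp_hasDerivAt 0 hc
    rwa [hc0] at this
  have hval : fderiv ℝ g x (A.mulVec x) = ∑ l, (A.mulVec x) l * hess V x l j :=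
    clm_expand _ _
  have hfun : (fun s => g (c s)) = fun s => ((Rot A s).mulVec (grad V x)) j := by
    funext s
    have := grad_equivariant V hdiff (Rot A s) (hA s)
      (hVinv (Rot A s) (hA s) (hdet s)) x
    have h2 : g (c s) = grad V ((Rot A s).mulVec x) j := rfl
    rw [h2, this]
  have hright : HasDerivAt (fun s => g (c s)) ((A.mulVec (grad V x)) j) 0 := by
    rw [hfun]; exact mulVec_hasDerivAt A (grad V x) j
  rw [← hval]
  exact hleft.unique hright

attribute [local simp] Matrix.mul_apply Fin.sum_univ_three Matrix.one_apply
  Matrix.transpose_apply Matrix.cons_val_zero Matrix.cons_val_one Matrix.head_cons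
  Matrix.cons_val_two Matrix.tail_cons Matrix.head_fin_const Matrix.vecHead Matrix.vecTail

lemma Rot0_eq (s : ℝ) : Rot !![0,0,0;0,0,-1;0,1,0] s =
    !![1,0,0;0,Real.cos s,-Real.sin s;0,Real.sin s,Real.cos s] := by
  ext a b
  fin_cases a <;> fin_cases b <;> simp [Rot] <;> ring

lemma Rot1_eq (s : ℝ) : Rot !![0,0,1;0,0,0;-1,0,0] s =
    !![Real.cos s,0,Real.sin s;0,1,0;-Real.sin s,0,Real.cos s] := by
  ext a b
  fin_cases a <;> fin_cases b <;> simp [Rot] <;> ring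

lemma Rot2_eq (s : ℝ) : Rot !![0,-1,0;1,0,0;0,0,0] s =
    !![Real.cos s,-Real.sin s,0;Real.sin s,Real.cos s,0;0,0,1] := by
  ext a b
  fin_cases a <;> fin_cases b <;> simp [Rot] <;> ring

lemma Rot0_orth (s : ℝ) :
    (Rot !![0,0,0;0,0,-1;0,1,0] s)ᵀ * Rot !![0,0,0;0,0,-1;0,1,0] s = 1 := by
  rw [Rot0_eq]
  ext a b
  fin_cases a <;> fin_cases b <;> simp <;> nlinarith [Real.sin_sq_add_cos_sq s]

lemma Rot1_orth (s : ℝ) :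
    (Rot !![0,0,1;0,0,0;-1,0,0] s)ᵀ * Rot !![0,0,1;0,0,0;-1,0,0] s = 1 := by
  rw [Rot1_eq]
  ext a b
  fin_cases a <;> fin_cases b <;> simp <;> nlinarith [Real.sin_sq_add_cos_sq s]

lemma Rot2_orth (s : ℝ) :
    (Rot !![0,-1,0;1,0,0;0,0,0] s)ᵀ * Rot !![0,-1,0;1,0,0;0,0,0] s = 1 := by
  rw [Rot2_eq]
  ext a b
  fin_cases a <;> fin_cases b <;> simp <;> nlinarith [Real.sin_sq_add_cos_sq s]

lemma Rot0_det (s : ℝ) : (Rot !![0,0,0;0,0,-1;0,1,0] s).det = 1 := by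
  rw [Rot0_eq, Matrix.det_fin_three]
  simp
  nlinarith [Real.sin_sq_add_cos_sq s]

lemma Rot1_det (s : ℝ) : (Rot !![0,0,1;0,0,0;-1,0,0] s).det = 1 := by
  rw [Rot1_eq, Matrix.det_fin_three]
  simp
  nlinarith [Real.sin_sq_add_cos_sq s]

lemma Rot2_det (s : ℝ) : (Rot !![0,-1,0;1,0,0;0,0,0] s).det = 1 := by
  rw [Rot2_eq, Matrix.det_fin_three]
  simp
  nlinarith [Real.sin_sq_add_cos_sq s]

lemma mulVec0 (v : Fin 3 → ℝ) (l : Fin 3) :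
    ((!![0,0,0;0,0,-1;0,1,0] : Matrix (Fin 3) (Fin 3) ℝ).mulVec v) l = hatMap v 0 l := by
  fin_cases l <;> simp [Matrix.mulVec, dotProduct, hatMap]

lemma mulVec1 (v : Fin 3 → ℝ) (l : Fin 3) :
    ((!![0,0,1;0,0,0;-1,0,0] : Matrix (Fin 3) (Fin 3) ℝ).mulVec v) l = hatMap v 1 l := by
  fin_cases l <;> simp [Matrix.mulVec, dotProduct, hatMap]

lemma mulVec2 (v : Fin 3 → ℝ) (l : Fin 3) :
    ((!![0,-1,0;1,0,0;0,0,0] : Matrix (Fin 3) (Fin 3) ℝ).mulVec v) l = hatMap v 2 l := by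
  fin_cases l <;> simp [Matrix.mulVec, dotProduct, hatMap]

/-- The key symmetry identity: `x^ ∇²V(x) = (∇V(x))^` for `SO(3)`-invariant `V`. -/
lemma key_identity (V : (Fin 3 → ℝ) → ℝ) (hV : ContDiff ℝ 2 V)
    (hVinv : ∀ R : Matrix (Fin 3) (Fin 3) ℝ, Rᵀ * R = 1 → R.det = 1 →
      ∀ x, V (R.mulVec x) = V x)
    (x : Fin 3 → ℝ) (i j : Fin 3) :
    ∑ l, hatMap x i l * hess V x l j = hatMap (grad V x) i j := by
  fin_cases i
  · have := key_gen V hV hVinv _ Rot0_orth Rot0_det x j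
    simp only [mulVec0] at this
    exact this
  · have := key_gen V hV hVinv _ Rot1_orth Rot1_det x j
    simp only [mulVec1] at this
    exact this
  · have := key_gen V hV hVinv _ Rot2_orth Rot2_det x j
    simp only [mulVec2] at this
    exact this
/-- Along solutions of Hagedorn's equations `q̇ = p/m`, `ṗ = −∇V(q)`,
`Q̇ = P/m`, `Ṗ = −∇²V(q)Q` in dimension `d = 3` with `V` rotationally invariant, the
complex matrix `𝒥(t) = q(t)^ P(t) − p(t)^ Q(t)` is constant in `t`. -/
theorem hagedorn_angular_momentum_conserved (m : ℝ) (hm : 0 < m)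
    (V : (Fin 3 → ℝ) → ℝ) (hV : ContDiff ℝ 2 V)
    (hVinv : ∀ R : Matrix (Fin 3) (Fin 3) ℝ, Rᵀ * R = 1 → R.det = 1 →
      ∀ x, V (R.mulVec x) = V x)
    (q p : ℝ → (Fin 3 → ℝ))
    (Q P : ℝ → Matrix (Fin 3) (Fin 3) ℂ)
    (hq : ∀ t i, HasDerivAt (fun s => q s i) (p t i / m) t)
    (hp : ∀ t i, HasDerivAt (fun s => p s i) (-(grad V (q t) i)) t)
    (hQ : ∀ t i j, HasDerivAt (fun s => Q s i j) ((P t i j) / (m : ℂ)) t)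
    (hP : ∀ t i j, HasDerivAt (fun s => P s i j)
      ((-(coeM (hess V (q t)) * Q t)) i j) t) :
    ∀ t i j, HasDerivAt
      (fun s => (coeM (hatMap (q s)) * P s - coeM (hatMap (p s)) * Q s) i j) 0 t := by
  intro t i j
  -- real-valued derivatives of the hat-map entries
  have hhatqR : ∀ k, HasDerivAt (fun s => hatMap (q s) i k) (hatMap (p t) i k / m) t := by
    intro k
    fin_cases i <;> fin_cases k <;> simp only [hatMap] <;>
      first
        | simpa [hatMap] using hasDerivAt_const t (0:ℝ)
        | simpa [hatMap, neg_div] using hq t 0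
        | simpa [hatMap, neg_div] using hq t 1
        | simpa [hatMap, neg_div] using hq t 2
        | simpa [hatMap, neg_div] using (hq t 0).fun_neg
        | simpa [hatMap, neg_div] using (hq t 1).fun_neg
        | simpa [hatMap, neg_div] using (hq t 2).fun_neg
  have hhatpR : ∀ k, HasDerivAt (fun s => hatMap (p s) i k)
      (-(hatMap (grad V (q t)) i k)) t := by
    intro k
    fin_cases i <;> fin_cases k <;> simp only [hatMap] <;>
      first
        | simpa [hatMap] using hasDerivAt_const t (0:ℝ)
        | simpa [hatMap] using hp t 0
        | simpa [hatMap] using hp t 1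
        | simpa [hatMap] using hp t 2
        | simpa [hatMap] using (hp t 0).fun_neg
        | simpa [hatMap] using (hp t 1).fun_neg
        | simpa [hatMap] using (hp t 2).fun_neg
  have hhatqC : ∀ k, HasDerivAt (fun s => ((hatMap (q s) i k : ℝ) : ℂ))
      (((hatMap (p t) i k / m : ℝ) : ℂ)) t := fun k => (hhatqR k).ofReal_comp
  have hhatpC : ∀ k, HasDerivAt (fun s => ((hatMap (p s) i k : ℝ) : ℂ))
      (((-(hatMap (grad V (q t)) i k) : ℝ) : ℂ)) t := fun k => (hhatpR k).ofReal_comp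
  have hfun : (fun s => (coeM (hatMap (q s)) * P s - coeM (hatMap (p s)) * Q s) i j)
      = fun s => (∑ k, ((hatMap (q s) i k : ℝ) : ℂ) * P s k j)
          - ∑ k, ((hatMap (p s) i k : ℝ) : ℂ) * Q s k j := by
    funext s
    simp only [coeM, Matrix.sub_apply, Matrix.mul_apply, Matrix.map_apply]
  have h1 : HasDerivAt (fun s => ∑ k, ((hatMap (q s) i k : ℝ) : ℂ) * P s k j)
      (∑ k, (((hatMap (p t) i k / m : ℝ) : ℂ) * P t k j
        + ((hatMap (q t) i k : ℝ) : ℂ) * ((-(coeM (hess V (q t)) * Q t)) k j))) t :=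
    HasDerivAt.fun_sum fun k _ => (hhatqC k).fun_mul (hP t k j)
  have h2 : HasDerivAt (fun s => ∑ k, ((hatMap (p s) i k : ℝ) : ℂ) * Q s k j)
      (∑ k, (((-(hatMap (grad V (q t)) i k) : ℝ) : ℂ) * Q t k j
        + ((hatMap (p t) i k : ℝ) : ℂ) * (P t k j / (m : ℂ)))) t :=
    HasDerivAt.fun_sum fun k _ => (hhatpC k).fun_mul (hQ t k j)
  have h3 := h1.fun_sub h2
  rw [hfun]
  convert h3 using 1
  · rfl
  -- show the derivative is zero via the key identity
  have eR := fun l => key_identity V hV hVinv (q t) i l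
  have eC : ∀ l, (∑ k, ((hatMap (q t) i k : ℝ) : ℂ) * ((hess V (q t) k l : ℝ) : ℂ))
      = ((hatMap (grad V (q t)) i l : ℝ) : ℂ) := by
    intro l
    exact_mod_cast congrArg (fun r : ℝ => (r : ℂ)) (eR l)
  simp only [Fin.sum_univ_three] at eC ⊢
  simp only [coeM, Matrix.neg_apply, Matrix.mul_apply, Matrix.map_apply,
    Fin.sum_univ_three, Complex.ofReal_div, Complex.ofReal_neg]
  linear_combination (Q t 0 j) * eC 0 + (Q t 1 j) * eC 1 + (Q t 2 j) * eC 2
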